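/- arXiv:1105.1734 — 4 statements merged into one kernel-verified Lean document; each statement's English description precedes it below -/
import Mathlib

section
/- For symmetric n×n real matrices S, S' and a fixed antisymmetric n×n matrix N, the bracket [S,S']_N := S N S' - S' N S is again a symmetric matrix, and it satisfies the Jacobi identity, so (Sym(R^n), [·,·]_N) is a Lie algebra. -/
open Matrix

/-- The bracket `[S,S']_N := S N S' - S' N S` on `n × n` real matrices. -/
def brN {n : ℕ} (N S S' : Matrix (Fin n) (Fin n) ℝ) : Matrix (Fin n) (Fin n) ℝ :=
  S * N * S' - S' * N * S

/-- For symmetric `S, S'` and antisymmetric `N`, the bracket `[S,S']_N = S N S' - S' N S`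
is again symmetric, and it satisfies the Jacobi identity; hence the symmetric matrices with
this bracket form a Lie algebra. -/
theorem symm_bracket_closed_and_jacobi (n : ℕ) (N : Matrix (Fin n) (Fin n) ℝ)
    (hN : Nᵀ = -N) :
    (∀ S S' : Matrix (Fin n) (Fin n) ℝ, Sᵀ = S → S'ᵀ = S' →
      (brN N S S')ᵀ = brN N S S') ∧
    (∀ S T U : Matrix (Fin n) (Fin n) ℝ, Sᵀ = S → Tᵀ = T → Uᵀ = U →
      brN N (brN N S T) U + brN N (brN N T U) S + brN N (brN N U S) T = 0) := by
  constructor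
  · intro S S' hS hS'
    simp [brN, transpose_sub, transpose_mul, hS, hS', hN]
    noncomm_ring
  · intro S T U _ _ _
    simp only [brN]
    noncomm_ring
end

section
/- For any antisymmetric bilinear form N̄ (i.e., an invertible 2k×2k antisymmetric matrix) and corank d, the map Ψ(S,A,B) := the block matrix [[S, A^T],[A, 2B]] is a Lie algebra isomorphism from (Sym(R^{2k}) ⋉ M_{d×2k}) ×_C Sym(R^d), with bracket [(S,A,B),(S',A',B')] = ([S,S']_{N̄}, A N̄ S' - A' N̄ S, (A N̄ A'^T)^{sym}), onto (Sym(R^{2k+d}), [·,·]_N) where N = diag(N̄, 0). -/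
open Matrix

/-- The symmetric part of a square matrix. -/
noncomputable def symPart {d : ℕ} (M : Matrix (Fin d) (Fin d) ℝ) : Matrix (Fin d) (Fin d) ℝ :=
  (1 / 2 : ℝ) • (M + Mᵀ)

/-- The map `Ψ(S, A, B) = [[S, Aᵀ], [A, 2B]]`. -/
noncomputable def PsiBI {k d : ℕ} (S : Matrix (Fin (2 * k)) (Fin (2 * k)) ℝ)
    (A : Matrix (Fin d) (Fin (2 * k)) ℝ) (B : Matrix (Fin d) (Fin d) ℝ) :
    Matrix (Fin (2 * k) ⊕ Fin d) (Fin (2 * k) ⊕ Fin d) ℝ :=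
  Matrix.fromBlocks S Aᵀ A ((2 : ℝ) • B)

/-- For an invertible antisymmetric `2k × 2k` matrix `N̄`, the map
`Ψ(S,A,B) = [[S, Aᵀ],[A, 2B]]` is a Lie algebra isomorphism from
`(Sym(ℝ^{2k}) ⋉ M_{d×2k}) ×_C Sym(ℝ^d)` with bracket
`[(S,A,B),(S',A',B')] = ([S,S']_N̄, A N̄ S' - A' N̄ S, (A N̄ A'ᵀ)^sym)`
onto `(Sym(ℝ^{2k+d}), [·,·]_N)` with `N = diag(N̄, 0)`: it maps into the symmetric
matrices, takes the bracket to the `N`-bracket, and is a bijection. -/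
theorem psi_iso (k d : ℕ) (Nbar : Matrix (Fin (2 * k)) (Fin (2 * k)) ℝ)
    (hanti : Nbarᵀ = -Nbar) (hinv : IsUnit Nbar.det) :
    (∀ (S : Matrix (Fin (2 * k)) (Fin (2 * k)) ℝ) (A : Matrix (Fin d) (Fin (2 * k)) ℝ)
        (B : Matrix (Fin d) (Fin d) ℝ), Sᵀ = S → Bᵀ = B →
      (PsiBI S A B)ᵀ = PsiBI S A B) ∧
    (∀ (S S' : Matrix (Fin (2 * k)) (Fin (2 * k)) ℝ) (A A' : Matrix (Fin d) (Fin (2 * k)) ℝ)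
        (B B' : Matrix (Fin d) (Fin d) ℝ), Sᵀ = S → S'ᵀ = S' → Bᵀ = B → B'ᵀ = B' →
      PsiBI (S * Nbar * S' - S' * Nbar * S) (A * Nbar * S' - A' * Nbar * S)
          (symPart (A * Nbar * A'ᵀ)) =
        PsiBI S A B * Matrix.fromBlocks Nbar 0 0 0 * PsiBI S' A' B' -
          PsiBI S' A' B' * Matrix.fromBlocks Nbar 0 0 0 * PsiBI S A B) ∧
    (∀ (S S' : Matrix (Fin (2 * k)) (Fin (2 * k)) ℝ) (A A' : Matrix (Fin d) (Fin (2 * k)) ℝ)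
        (B B' : Matrix (Fin d) (Fin d) ℝ),
      PsiBI S A B = PsiBI S' A' B' → S = S' ∧ A = A' ∧ B = B') ∧
    (∀ X : Matrix (Fin (2 * k) ⊕ Fin d) (Fin (2 * k) ⊕ Fin d) ℝ, Xᵀ = X →
      ∃ S A B, Sᵀ = S ∧ Bᵀ = B ∧ PsiBI S A B = X) := by
  refine ⟨?_, ?_, ?_, ?_⟩
  · intro S A B hS hB
    simp [PsiBI, fromBlocks_transpose, hS, hB]
  · intro S S' A A' B B' hS hS' hB hB'
    have hoff : (A * Nbar * S' - A' * Nbar * S)ᵀ = S * Nbar * A'ᵀ - S' * Nbar * Aᵀ := by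
      simp only [transpose_sub, transpose_mul, hanti, hS, hS', Matrix.mul_neg,
        Matrix.neg_mul, mul_assoc]
      rw [← Matrix.mul_assoc S' Nbar Aᵀ, ← Matrix.mul_assoc S Nbar A'ᵀ]
      abel
    have hB2 : (2 : ℝ) • symPart (A * Nbar * A'ᵀ) = A * Nbar * A'ᵀ - A' * Nbar * Aᵀ := by
      simp only [symPart, smul_smul, transpose_mul, transpose_transpose, hanti]
      norm_num
      rw [← Matrix.mul_assoc A' Nbar Aᵀ]
      abel
    simp only [PsiBI, Matrix.fromBlocks_multiply, Matrix.mul_zero, Matrix.zero_mul,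
      add_zero, zero_add, hoff, hB2]
    ext (i|i) (j|j) <;> simp [Matrix.fromBlocks, Matrix.sub_apply]
  · intro S S' A A' B B' h
    have h11 := congrArg Matrix.toBlocks₁₁ h
    have h21 := congrArg Matrix.toBlocks₂₁ h
    have h22 := congrArg Matrix.toBlocks₂₂ h
    simp only [PsiBI, Matrix.toBlocks_fromBlocks₁₁, Matrix.toBlocks_fromBlocks₂₁,
      Matrix.toBlocks_fromBlocks₂₂] at h11 h21 h22
    refine ⟨h11, h21, ?_⟩
    have := congrArg (fun M => (1/2 : ℝ) • M) h22
    simpa [smul_smul] using this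
  · intro X hX
    have hX' : ∀ a b, X b a = X a b := fun a b => congrFun (congrFun hX a) b
    refine ⟨Matrix.of (fun i j => X (.inl i) (.inl j)),
      Matrix.of (fun i j => X (.inr i) (.inl j)),
      Matrix.of (fun i j => (1/2 : ℝ) * X (.inr i) (.inr j)), ?_, ?_, ?_⟩
    · ext i j; exact hX' (.inl i) (.inl j)
    · ext i j
      show (1/2 : ℝ) * X (.inr j) (.inr i) = (1/2 : ℝ) * X (.inr i) (.inr j)
      rw [hX' (.inr i) (.inr j)]
    · ext (i|i) (j|j) <;> simp [PsiBI, Matrix.fromBlocks]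
      exact hX' (.inl i) (.inr j)
end

section
/- The map C((S,A),(S',A')) := (A N̄ A'^T)^{sym} is a Sym(R^d)-valued Lie algebra 2-cocycle on the semidirect product Lie algebra Sym(R^{2k}) ⋉ M_{d×2k}: it is bilinear, antisymmetric, and satisfies C([ξ,η],ζ) + C([ζ,ξ],η) + C([η,ζ],ξ) = 0 for all ξ,η,ζ. -/
open Matrix

/-- The `Sym(ℝ^d)`-valued cocycle `C((S,A),(S',A')) = (A N̄ A'ᵀ)^sym`. -/
noncomputable def cocycleC {k d : ℕ} (Nbar : Matrix (Fin (2 * k)) (Fin (2 * k)) ℝ)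
    (x y : Matrix (Fin (2 * k)) (Fin (2 * k)) ℝ × Matrix (Fin d) (Fin (2 * k)) ℝ) :
    Matrix (Fin d) (Fin d) ℝ :=
  symPart (x.2 * Nbar * y.2ᵀ)

/-- The semidirect product bracket `[(S,A),(S',A')] = ([S,S']_N̄, A N̄ S' - A' N̄ S)`
on `Sym(ℝ^{2k}) ⋉ M_{d×2k}`. -/
noncomputable def sdBracket {k d : ℕ} (Nbar : Matrix (Fin (2 * k)) (Fin (2 * k)) ℝ)
    (x y : Matrix (Fin (2 * k)) (Fin (2 * k)) ℝ × Matrix (Fin d) (Fin (2 * k)) ℝ) :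
    Matrix (Fin (2 * k)) (Fin (2 * k)) ℝ × Matrix (Fin d) (Fin (2 * k)) ℝ :=
  (x.1 * Nbar * y.1 - y.1 * Nbar * x.1, x.2 * Nbar * y.1 - y.2 * Nbar * x.1)

/-- `C((S,A),(S',A')) = (A N̄ A'ᵀ)^sym` is a `Sym(ℝ^d)`-valued Lie algebra 2-cocycle on
the semidirect product Lie algebra `Sym(ℝ^{2k}) ⋉ M_{d×2k}`: it takes values in the
symmetric matrices, is bilinear, antisymmetric, and satisfies the cocycle identity
`C([ξ,η],ζ) + C([ζ,ξ],η) + C([η,ζ],ξ) = 0`. -/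
theorem cocycle_property (k d : ℕ) (Nbar : Matrix (Fin (2 * k)) (Fin (2 * k)) ℝ)
    (hanti : Nbarᵀ = -Nbar) (hinv : IsUnit Nbar.det) :
    (∀ x y : Matrix (Fin (2 * k)) (Fin (2 * k)) ℝ × Matrix (Fin d) (Fin (2 * k)) ℝ,
      (cocycleC Nbar x y)ᵀ = cocycleC Nbar x y) ∧
    (∀ (x x' y : Matrix (Fin (2 * k)) (Fin (2 * k)) ℝ × Matrix (Fin d) (Fin (2 * k)) ℝ)
        (c : ℝ),
      cocycleC Nbar (x + x') y = cocycleC Nbar x y + cocycleC Nbar x' y ∧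
      cocycleC Nbar y (x + x') = cocycleC Nbar y x + cocycleC Nbar y x' ∧
      cocycleC Nbar (c • x) y = c • cocycleC Nbar x y ∧
      cocycleC Nbar y (c • x) = c • cocycleC Nbar y x) ∧
    (∀ x y : Matrix (Fin (2 * k)) (Fin (2 * k)) ℝ × Matrix (Fin d) (Fin (2 * k)) ℝ,
      cocycleC Nbar x y = -cocycleC Nbar y x) ∧
    (∀ ξ η ζ : Matrix (Fin (2 * k)) (Fin (2 * k)) ℝ × Matrix (Fin d) (Fin (2 * k)) ℝ,
      ξ.1ᵀ = ξ.1 → η.1ᵀ = η.1 → ζ.1ᵀ = ζ.1 →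
      cocycleC Nbar (sdBracket Nbar ξ η) ζ + cocycleC Nbar (sdBracket Nbar ζ ξ) η +
        cocycleC Nbar (sdBracket Nbar η ζ) ξ = 0) := by
  refine ⟨?_, ?_, ?_, ?_⟩
  · intro x y
    simp only [cocycleC, symPart, transpose_smul, transpose_add, transpose_transpose]
    module
  · intro x x' y c
    simp only [cocycleC, symPart, Prod.snd_add, Prod.smul_snd, Matrix.add_mul,
      Matrix.mul_add, Matrix.smul_mul, Matrix.mul_smul, transpose_add, transpose_smul,
      smul_add, transpose_smul]
    refine ⟨by module, by module, by module, by module⟩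
  · intro x y
    simp only [cocycleC, symPart, transpose_mul, transpose_transpose, hanti,
      Matrix.neg_mul, Matrix.mul_neg, Matrix.mul_assoc]
    module
  · intro ξ η ζ hS hT hU
    simp only [cocycleC, symPart, sdBracket, Matrix.sub_mul, Matrix.mul_sub,
      transpose_sub, transpose_mul, transpose_transpose, hanti, hS, hT, hU,
      Matrix.neg_mul, Matrix.mul_neg, neg_neg, Matrix.mul_assoc]
    module
end

section
/- Let (V,Ω) be a symplectic vector space with Poisson tensor Π (so Π^♯ = (Ω^♭)^{-1} : V* → V). The map Γ(σ,α,β) := (Π^♯∘σ, Π^♯(α), β) is a Lie algebra isomorphism from (Sym(V) ⋉ V*) ×_C R, with bracket [(σ,α,β),(σ',α',β')] = (σ∘Π^♯∘σ' - σ'∘Π^♯∘σ, α∘Π^♯∘σ' - α'∘Π^♯∘σ, Π(α,α')), onto the Jacobi Lie algebra jac(V,Ω) = sp(V,Ω) ⋉ (V ×_Ω R) with bracket [(S₂,S₁,S₀),(S₂',S₁',S₀')] = ([S₂,S₂'], S₂S₁' - S₂'S₁, Ω(S₁,S₁')). -/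
/-- Membership in the symplectic Lie algebra: `Ω(Su, v) + Ω(u, Sv) = 0`. -/
noncomputable def InSp {V : Type*} [AddCommGroup V] [Module ℝ V]
    (Ω : V →ₗ[ℝ] V →ₗ[ℝ] ℝ) (S : V →ₗ[ℝ] V) : Prop :=
  ∀ u v : V, Ω (S u) v + Ω u (S v) = 0

/-- The Jacobi Lie algebra bracket on `sp(V,Ω) × V × ℝ`. -/
noncomputable def jacBracket {V : Type*} [AddCommGroup V] [Module ℝ V]
    (Ω : V →ₗ[ℝ] V →ₗ[ℝ] ℝ) (x y : (V →ₗ[ℝ] V) × V × ℝ) : (V →ₗ[ℝ] V) × V × ℝ :=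
  (x.1 ∘ₗ y.1 - y.1 ∘ₗ x.1, (x.1 y.2.1 - y.1 x.2.1, Ω x.2.1 y.2.1))

/-- The bracket of `(Sym(V) ⋉ V*) ×_C ℝ`, where `P = Π^♯`:
`[(σ,α,β),(σ',α',β')] = (σ∘P∘σ' - σ'∘P∘σ, α∘P∘σ' - α'∘P∘σ, Π(α,α'))` with
`Π(α,α') = α(P α')`. -/
noncomputable def srcBracket {V : Type*} [AddCommGroup V] [Module ℝ V]
    (P : (V →ₗ[ℝ] ℝ) →ₗ[ℝ] V)
    (x y : (V →ₗ[ℝ] V →ₗ[ℝ] ℝ) × (V →ₗ[ℝ] ℝ) × ℝ) :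
    (V →ₗ[ℝ] V →ₗ[ℝ] ℝ) × (V →ₗ[ℝ] ℝ) × ℝ :=
  (x.1 ∘ₗ (P ∘ₗ y.1) - y.1 ∘ₗ (P ∘ₗ x.1),
    (x.2.1 ∘ₗ (P ∘ₗ y.1) - y.2.1 ∘ₗ (P ∘ₗ x.1), x.2.1 (P y.2.1)))

/-- The map `Γ(σ,α,β) = (P∘σ, P(α), β)` into the Jacobi Lie algebra. -/
noncomputable def GammaJac {V : Type*} [AddCommGroup V] [Module ℝ V]
    (P : (V →ₗ[ℝ] ℝ) →ₗ[ℝ] V)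
    (x : (V →ₗ[ℝ] V →ₗ[ℝ] ℝ) × (V →ₗ[ℝ] ℝ) × ℝ) : (V →ₗ[ℝ] V) × V × ℝ :=
  (P ∘ₗ x.1, (P x.2.1, x.2.2))

/-- Let `(V,Ω)` be a symplectic vector space with Poisson tensor `Π`, so that
`P = Π^♯ = (Ω^♭)⁻¹`.  The map `Γ(σ,α,β) = (Π^♯∘σ, Π^♯(α), β)` is a Lie algebra
isomorphism from `(Sym(V) ⋉ V*) ×_C ℝ` onto the Jacobi Lie algebra
`jac(V,Ω) = sp(V,Ω) ⋉ (V ×_Ω ℝ)`: it maps symmetric `σ` into `sp(V,Ω)`, takes the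
source bracket to the Jacobi bracket, and is a bijection onto triples
`(S₂,S₁,S₀)` with `S₂ ∈ sp(V,Ω)`. -/
theorem gamma_jacobi_iso (V : Type*) [AddCommGroup V] [Module ℝ V]
    (Ω : V →ₗ[ℝ] V →ₗ[ℝ] ℝ) (hskew : ∀ u v : V, Ω u v = -Ω v u)
    (P : (V →ₗ[ℝ] ℝ) →ₗ[ℝ] V)
    (hP₁ : ∀ (α : V →ₗ[ℝ] ℝ) (v : V), Ω (P α) v = α v)
    (hP₂ : ∀ u : V, P (Ω u) = u) :
    (∀ x : (V →ₗ[ℝ] V →ₗ[ℝ] ℝ) × (V →ₗ[ℝ] ℝ) × ℝ,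
      (∀ u v : V, x.1 u v = x.1 v u) → InSp Ω (GammaJac P x).1) ∧
    (∀ x y : (V →ₗ[ℝ] V →ₗ[ℝ] ℝ) × (V →ₗ[ℝ] ℝ) × ℝ,
      (∀ u v : V, x.1 u v = x.1 v u) → (∀ u v : V, y.1 u v = y.1 v u) →
      GammaJac P (srcBracket P x y) = jacBracket Ω (GammaJac P x) (GammaJac P y)) ∧
    (∀ x y : (V →ₗ[ℝ] V →ₗ[ℝ] ℝ) × (V →ₗ[ℝ] ℝ) × ℝ,
      GammaJac P x = GammaJac P y → x = y) ∧
    (∀ z : (V →ₗ[ℝ] V) × V × ℝ, InSp Ω z.1 →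
      ∃ x : (V →ₗ[ℝ] V →ₗ[ℝ] ℝ) × (V →ₗ[ℝ] ℝ) × ℝ,
        (∀ u v : V, x.1 u v = x.1 v u) ∧ GammaJac P x = z) := by
  have hOP : ∀ α : V →ₗ[ℝ] ℝ, Ω (P α) = α := fun α => LinearMap.ext (hP₁ α)
  refine ⟨?_, ?_, ?_, ?_⟩
  · intro x hx u v
    simp only [GammaJac, LinearMap.comp_apply]
    rw [hP₁, hskew u (P (x.1 v)), hP₁, hx u v]
    ring
  · intro x y hx hy
    simp only [GammaJac, srcBracket, jacBracket, Prod.mk.injEq]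
    refine ⟨?_, ?_, ?_⟩
    · ext v
      simp [LinearMap.comp_apply]
    · have h1 : (x.2.1 ∘ₗ (P ∘ₗ y.1) : V →ₗ[ℝ] ℝ) = -(y.1 (P x.2.1)) := by
        ext v
        simp only [LinearMap.comp_apply, LinearMap.neg_apply]
        rw [← hP₁ x.2.1, hskew, hP₁, hy v (P x.2.1)]
      have h2 : (y.2.1 ∘ₗ (P ∘ₗ x.1) : V →ₗ[ℝ] ℝ) = -(x.1 (P y.2.1)) := by
        ext v
        simp only [LinearMap.comp_apply, LinearMap.neg_apply]
        rw [← hP₁ y.2.1, hskew, hP₁, hx v (P y.2.1)]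
      rw [map_sub, h1, h2]
      simp only [map_neg, LinearMap.comp_apply]
      abel
    · rw [hP₁]
  · intro x y h
    simp only [GammaJac, Prod.mk.injEq] at h
    obtain ⟨h1, h2, h3⟩ := h
    refine Prod.ext ?_ (Prod.ext ?_ h3)
    · ext u v
      have := congrArg (fun f => Ω (f u) v) h1
      simpa [LinearMap.comp_apply, hP₁] using this
    · rw [← hOP x.2.1, h2, hOP]
  · intro z hz
    refine ⟨(Ω ∘ₗ z.1, (Ω z.2.1, z.2.2)), ?_, ?_⟩
    · intro u v
      simp only [LinearMap.comp_apply]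
      have := hz u v
      rw [hskew u (z.1 v)] at this
      linarith
    · simp only [GammaJac]
      refine Prod.ext ?_ (Prod.ext ?_ rfl)
      · ext u
        simp [LinearMap.comp_apply, hP₂]
      · exact hP₂ _
end
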